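/- Define c_{k,m}(q) = h_{2m-k}({1,q²}^{k-m+1}) + q·h_{2m-k-1}({1,q²}^{k-m+1}) and Q_{m,k}(q) = det_{0≤i,j≤k-1}( c_{m-k+i+1, m-k+j}(q) ). Then Q_{m,k}(q) has nonnegative integer coefficients for all 1 ≤ k < m. -/

import Mathlib

open Finset Polynomial

/-- `hh q r s n` is the complete homogeneous symmetric function `h_n({1}^r, {q}^s)`. -/
noncomputable def hh {K : Type*} [CommSemiring K] (q : K) (r s : ℕ) (n : ℕ) : K :=
  PowerSeries.coeff n
    ((PowerSeries.mk fun _ => (1 : K)) ^ r * (PowerSeries.mk fun k => q ^ k) ^ s)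

/-- `h_n({1}^r,{q}^s)` with integer arguments, zero when `r < 0`, `s < 0` or `n < 0`. -/
noncomputable def hz {K : Type*} [CommSemiring K] (q : K) (r s n : ℤ) : K :=
  if 0 ≤ r ∧ 0 ≤ s ∧ 0 ≤ n then hh q r.toNat s.toNat n.toNat else 0

/-- `c_{k,m}(q) = h_{2m-k}({1,q²}^{k-m+1}) + q·h_{2m-k-1}({1,q²}^{k-m+1})`. -/
noncomputable def cP (k m : ℤ) : Polynomial ℤ :=
  hz ((Polynomial.X : Polynomial ℤ) ^ 2) (k - m + 1) (k - m + 1) (2 * m - k) +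
    Polynomial.X *
      hz ((Polynomial.X : Polynomial ℤ) ^ 2) (k - m + 1) (k - m + 1) (2 * m - k - 1)

/-- `Q_{m,k}(q) = det_{0≤i,j≤k-1}( c_{m-k+i+1,m-k+j}(q) )`, over `ℤ[q]`. -/
noncomputable def Qdet (m k : ℕ) : Polynomial ℤ :=
  Matrix.det (Matrix.of fun i j : Fin k =>
    cP ((m : ℤ) - k + i + 1) ((m : ℤ) - k + j))


section HH
variable {K : Type*} [CommRing K] (q : K)
open PowerSeries

lemma one_sub_mul_mk (c : K) :
    (1 - PowerSeries.C c * PowerSeries.X) * PowerSeries.mk (fun k => c ^ k) = 1 := by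
  ext n
  rw [sub_mul, one_mul, map_sub]
  cases n with
  | zero => simp
  | succ n =>
    rw [mul_assoc, PowerSeries.coeff_C_mul, mul_comm PowerSeries.X,
      PowerSeries.coeff_succ_mul_X]
    simp [pow_succ, mul_comm]

lemma hh_zero (r s : ℕ) : hh q r s 0 = 1 := by
  simp [hh, PowerSeries.coeff_zero_eq_constantCoeff, map_mul, map_pow]

lemma hh_succ_s (r s n : ℕ) :
    hh q r (s + 1) (n + 1) = q * hh q r (s + 1) n + hh q r s (n + 1) := by
  have key : ((PowerSeries.mk fun _ => (1 : K)) ^ r * (PowerSeries.mk fun k => q ^ k) ^ (s+1))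
      * (1 - PowerSeries.C q * PowerSeries.X)
      = (PowerSeries.mk fun _ => (1 : K)) ^ r * (PowerSeries.mk fun k => q ^ k) ^ s := by
    have := one_sub_mul_mk (K := K) q
    calc ((PowerSeries.mk fun _ => (1 : K)) ^ r * (PowerSeries.mk fun k => q ^ k) ^ (s+1))
        * (1 - PowerSeries.C q * PowerSeries.X)
        = ((PowerSeries.mk fun _ => (1 : K)) ^ r * (PowerSeries.mk fun k => q ^ k) ^ s) *
          ((1 - PowerSeries.C q * PowerSeries.X) * PowerSeries.mk (fun k => q ^ k)) := by
          ring
      _ = _ := by rw [this, mul_one]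
  have := congrArg (PowerSeries.coeff (n+1)) key
  rw [mul_sub, mul_one, map_sub, mul_comm _ (PowerSeries.C q * PowerSeries.X),
    mul_assoc, PowerSeries.coeff_C_mul, mul_comm PowerSeries.X, PowerSeries.coeff_succ_mul_X]
    at this
  unfold hh
  linear_combination this

lemma hh_succ_r (r s n : ℕ) :
    hh q (r + 1) s (n + 1) = hh q (r + 1) s n + hh q r s (n + 1) := by
  have h1 : (1 - PowerSeries.C (1:K) * PowerSeries.X) * PowerSeries.mk (fun k => (1:K) ^ k) = 1 :=
    one_sub_mul_mk (1 : K)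
  have hmk : (PowerSeries.mk fun k => (1:K) ^ k) = (PowerSeries.mk fun _ => (1:K)) := by
    ext n; simp
  rw [hmk] at h1
  have key : ((PowerSeries.mk fun _ => (1 : K)) ^ (r+1) * (PowerSeries.mk fun k => q ^ k) ^ s)
      * (1 - PowerSeries.C 1 * PowerSeries.X)
      = (PowerSeries.mk fun _ => (1 : K)) ^ r * (PowerSeries.mk fun k => q ^ k) ^ s := by
    calc ((PowerSeries.mk fun _ => (1 : K)) ^ (r+1) * (PowerSeries.mk fun k => q ^ k) ^ s)
        * (1 - PowerSeries.C 1 * PowerSeries.X)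
        = ((PowerSeries.mk fun _ => (1 : K)) ^ r * (PowerSeries.mk fun k => q ^ k) ^ s) *
          ((1 - PowerSeries.C 1 * PowerSeries.X) * PowerSeries.mk (fun _ => (1:K))) := by
          ring
      _ = _ := by rw [h1, mul_one]
  have := congrArg (PowerSeries.coeff (n+1)) key
  rw [mul_sub, mul_one, map_sub, mul_comm _ (PowerSeries.C 1 * PowerSeries.X),
    mul_assoc, PowerSeries.coeff_C_mul, mul_comm PowerSeries.X, PowerSeries.coeff_succ_mul_X]
    at this
  unfold hh
  linear_combination this

lemma hh_zero_zero (n : ℕ) : hh q 0 0 (n + 1) = 0 := by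
  simp [hh]

lemma hh_one_zero (n : ℕ) : hh q 1 0 n = 1 := by
  simp [hh]

lemma hh_zero_one (n : ℕ) : hh q 0 1 n = q ^ n := by
  simp [hh]

end HH


section Paths

abbrev Pz := Polynomial ℤ

/-- weight of a flat step at level `y` -/
noncomputable def wlv (y : ℕ) : Pz := if Even y then Polynomial.X ^ 2 else 1

/-- height of the path at horizontal position `x` -/
def pval (s Xl : ℕ) (R : Finset ℕ) (x : ℕ) : ℕ := s + (R ∩ range x).card + (x - Xl)

/-- weight of a path -/
noncomputable def wt (s Xl : ℕ) (R : Finset ℕ) : Pz :=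
  ∏ x ∈ range Xl \ R, wlv (pval s Xl R x)

/-- rise sets of paths from `(0,s)` to `(Xl,e)` -/
def pathsF (s e Xl : ℕ) : Finset (Finset ℕ) :=
  if s ≤ e then (range Xl).powersetCard (e - s) else ∅

noncomputable def PS (s e Xl : ℕ) : Pz := ∑ R ∈ pathsF s e Xl, wt s Xl R

/-- number of odd values in `[s,e]` -/
def oc (s e : ℕ) : ℕ := ((Icc s e).filter (fun y => ¬ Even y)).card
def ec (s e : ℕ) : ℕ := ((Icc s e).filter (fun y => Even y)).card

lemma oc_self (s : ℕ) : oc s s = if Even s then 0 else 1 := by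
  simp only [oc, Icc_self, filter_singleton]
  by_cases h : Even s <;> simp [h]

lemma ec_self (s : ℕ) : ec s s = if Even s then 1 else 0 := by
  simp only [ec, Icc_self, filter_singleton]
  by_cases h : Even s <;> simp [h]

lemma oc_succ (s e : ℕ) (h : s ≤ e + 1) :
    oc s (e + 1) = oc s e + if Even (e+1) then 0 else 1 := by
  have hIcc : Icc s (e+1) = insert (e+1) (Icc s e) := by
    ext x; simp only [mem_Icc, mem_insert]; omega
  have hnm : (e+1) ∉ (Icc s e).filter (fun y => ¬ Even y) := by
    simp [mem_filter, mem_Icc]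
  by_cases he : Even (e+1)
  · have ho : ¬ Odd (e+1) := by simpa [Nat.not_odd_iff_even] using he
    simp [oc, hIcc, filter_insert, he, ho]
  · have ho : Odd (e+1) := Nat.not_even_iff_odd.mp he
    have hnm' : (e+1) ∉ (Icc s e).filter (fun y => Odd y) := by
      simp [mem_filter, mem_Icc]
    simp [oc, hIcc, filter_insert, he, ho, card_insert_of_notMem hnm']

lemma ec_succ (s e : ℕ) (h : s ≤ e + 1) :
    ec s (e + 1) = ec s e + if Even (e+1) then 1 else 0 := by
  have hIcc : Icc s (e+1) = insert (e+1) (Icc s e) := by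
    ext x; simp only [mem_Icc, mem_insert]; omega
  have hnm : (e+1) ∉ (Icc s e).filter (fun y => Even y) := by
    simp [mem_filter, mem_Icc]
  by_cases he : Even (e+1)
  · simp [ec, hIcc, filter_insert, he, card_insert_of_notMem hnm]
  · simp [ec, hIcc, filter_insert, he]

lemma PS_empty (s e Xl : ℕ) (h : Xl < e - s) : PS s e Xl = 0 := by
  unfold PS pathsF
  by_cases hse : s ≤ e
  · rw [if_pos hse]
    have : (range Xl).powersetCard (e - s) = ∅ := by
      rw [Finset.powersetCard_eq_empty]
      simpa using h
    simp [this]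
  · simp [hse]

/-- main path-counting lemma -/
lemma PS_eq : ∀ Xl s e, s ≤ e → e - s ≤ Xl →
    PS s e Xl = hh ((Polynomial.X : Pz) ^ 2) (oc s e) (ec s e) (Xl - (e - s)) := by
  intro Xl
  induction Xl with
  | zero =>
    intro s e hse h0
    have : e = s := by omega
    subst this
    simp only [PS, pathsF, if_pos le_rfl, Nat.sub_self, range_zero]
    rw [powersetCard_zero]
    simp only [sum_singleton, wt, sdiff_empty, range_zero, prod_empty]
    rw [hh_zero]
  | succ Xl ih =>
    intro s e hse hXl
    by_cases heq : e = s
    · subst heq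
      simp only [PS, pathsF, if_pos le_rfl, Nat.sub_self]
      rw [powersetCard_zero]
      simp only [sum_singleton, wt, sdiff_empty]
      have hv : ∀ x ∈ range (Xl+1), wlv (pval e (Xl+1) ∅ x) = wlv e := by
        intro x hx
        simp only [mem_range] at hx
        have : pval e (Xl+1) ∅ x = e := by
          simp [pval]; omega
        rw [this]
      rw [prod_congr rfl hv, prod_const, card_range]
      by_cases he : Even e
      · rw [oc_self, ec_self, if_pos he, if_pos he, hh_zero_one]
        simp [wlv, he]
      · rw [oc_self, ec_self, if_neg he, if_neg he, hh_one_zero]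
        simp [wlv, he]
    · -- s < e
      have hslt : s < e := lt_of_le_of_ne hse (Ne.symm heq)
      obtain ⟨e', rfl⟩ : ∃ e', e = e' + 1 := ⟨e - 1, by omega⟩
      have hse' : s ≤ e' := by omega
      have hsplit : PS s (e'+1) (Xl+1)
          = (∑ R ∈ (pathsF s (e'+1) (Xl+1)).filter (fun R => Xl ∈ R), wt s (Xl+1) R)
          + ∑ R ∈ (pathsF s (e'+1) (Xl+1)).filter (fun R => Xl ∉ R), wt s (Xl+1) R := by
        rw [PS, ← sum_filter_add_sum_filter_not (pathsF s (e'+1) (Xl+1)) (fun R => Xl ∈ R)]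
      -- Part B : Xl ∈ R  (rise as last step)
      have hB : (∑ R ∈ (pathsF s (e'+1) (Xl+1)).filter (fun R => Xl ∈ R), wt s (Xl+1) R)
          = PS s e' Xl := by
        rw [PS]
        refine sum_bij' (fun R _ => R.erase Xl) (fun R _ => insert Xl R) ?_ ?_ ?_ ?_ ?_
        · intro R hR
          simp only [mem_filter, pathsF, if_pos (by omega : s ≤ e'+1), mem_powersetCard] at hR
          obtain ⟨⟨hsub, hcard⟩, hmem⟩ := hR
          simp only [pathsF, if_pos hse', mem_powersetCard]
          constructor
          · intro x hx
            simp only [mem_erase] at hx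
            have := hsub hx.2
            simp only [mem_range] at this ⊢
            omega
          · rw [card_erase_of_mem hmem, hcard]; omega
        · intro R hR
          simp only [pathsF, if_pos hse', mem_powersetCard] at hR
          simp only [mem_filter, pathsF, if_pos (by omega : s ≤ e'+1), mem_powersetCard]
          have hXlnot : Xl ∉ R := fun h => by simpa using mem_range.mp (hR.1 h)
          refine ⟨⟨?_, ?_⟩, mem_insert_self _ _⟩
          · intro x hx
            rcases mem_insert.mp hx with h | h
            · simp [h]
            · have := hR.1 h; simp only [mem_range] at this ⊢; omega
          · rw [card_insert_of_notMem hXlnot, hR.2]; omega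
        · intro R hR
          simp only [mem_filter] at hR
          exact insert_erase hR.2
        · intro R hR
          simp only [pathsF, if_pos hse', mem_powersetCard] at hR
          have hXlnot : Xl ∉ R := fun h => by simpa using mem_range.mp (hR.1 h)
          exact erase_insert hXlnot
        · intro R hR
          simp only [mem_filter, pathsF, if_pos (by omega : s ≤ e'+1), mem_powersetCard] at hR
          obtain ⟨⟨hsub, hcard⟩, hmem⟩ := hR
          unfold wt
          have hset : range (Xl+1) \ R = range Xl \ R.erase Xl := by
            ext x
            simp only [mem_sdiff, mem_range, mem_erase]
            constructor
            · rintro ⟨hx, hxR⟩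
              have hxne : x ≠ Xl := fun hc => hxR (hc ▸ hmem)
              exact ⟨by omega, fun h => hxR h.2⟩
            · rintro ⟨hx, hxR⟩
              exact ⟨by omega, fun hmm => hxR ⟨by omega, hmm⟩⟩
          rw [hset]
          apply prod_congr rfl
          intro x hx
          simp only [mem_sdiff, mem_range] at hx
          have hpv : pval s (Xl+1) R x = pval s Xl (R.erase Xl) x := by
            unfold pval
            have hRR : R ∩ range x = (R.erase Xl) ∩ range x := by
              ext y
              simp only [mem_inter, mem_erase, mem_range]
              constructor
              · rintro ⟨h1, h2⟩
                exact ⟨⟨by omega, h1⟩, h2⟩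
              · rintro ⟨⟨_, h1⟩, h2⟩; exact ⟨h1, h2⟩
            rw [hRR]
            omega
          rw [hpv]
      -- Part A : Xl ∉ R  (flat last step at level e'+1)
      have hA : (∑ R ∈ (pathsF s (e'+1) (Xl+1)).filter (fun R => Xl ∉ R), wt s (Xl+1) R)
          = wlv (e'+1) * PS s (e'+1) Xl := by
        rw [PS, mul_sum]
        have hidx : (pathsF s (e'+1) (Xl+1)).filter (fun R => Xl ∉ R) = pathsF s (e'+1) Xl := by
          ext R
          simp only [mem_filter, pathsF, if_pos (by omega : s ≤ e'+1), mem_powersetCard]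
          constructor
          · rintro ⟨⟨hsub, hcard⟩, hmem⟩
            refine ⟨fun x hx => ?_, hcard⟩
            have := hsub hx
            simp only [mem_range] at this ⊢
            rcases Nat.lt_succ_iff_lt_or_eq.mp this with h|h
            · exact h
            · exact absurd (h ▸ hx) hmem
          · rintro ⟨hsub, hcard⟩
            have hXlnot : Xl ∉ R := fun h => by simpa using mem_range.mp (hsub h)
            exact ⟨⟨fun x hx => by have := hsub hx; simp only [mem_range] at this ⊢; omega,
              hcard⟩, hXlnot⟩
        rw [hidx]
        apply sum_congr rfl
        intro R hR
        simp only [pathsF, if_pos (by omega : s ≤ e'+1), mem_powersetCard] at hR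
        obtain ⟨hsub, hcard⟩ := hR
        have hXlnot : Xl ∉ R := fun h => by simpa using mem_range.mp (hsub h)
        unfold wt
        have hset : range (Xl+1) \ R = insert Xl (range Xl \ R) := by
          ext x
          simp only [mem_sdiff, mem_range, mem_insert]
          constructor
          · rintro ⟨hx, hxR⟩
            rcases Nat.lt_succ_iff_lt_or_eq.mp hx with h|h
            · exact Or.inr ⟨h, hxR⟩
            · exact Or.inl h
          · rintro (h | ⟨h1, h2⟩)
            · exact ⟨by omega, h ▸ hXlnot⟩
            · exact ⟨by omega, h2⟩
        rw [hset, prod_insert (by simp)]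
        have htop : pval s (Xl+1) R Xl = e'+1 := by
          unfold pval
          have h1 : R ∩ range Xl = R := inter_eq_left.mpr hsub
          rw [h1, hcard]
          omega
        rw [htop]
        congr 1
        apply prod_congr rfl
        intro x hx
        simp only [mem_sdiff, mem_range] at hx
        have hpv : pval s (Xl+1) R x = pval s Xl R x := by unfold pval; omega
        rw [hpv]
      rw [hsplit, hB, hA]
      by_cases hc : (e'+1) - s ≤ Xl
      · have ihA := ih s (e'+1) (by omega) hc
        have ihB := ih s e' hse' (by omega)
        rw [ihA, ihB]
        have hn : Xl + 1 - (e' + 1 - s) = (Xl - (e'+1-s)) + 1 := by omega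
        have hn' : Xl - (e' - s) = (Xl - (e'+1-s)) + 1 := by omega
        rw [hn, hn']
        by_cases he : Even (e'+1)
        · rw [ec_succ s e' (by omega), oc_succ s e' (by omega), if_pos he, if_pos he,
            add_zero]
          rw [hh_succ_s]
          simp only [wlv, if_pos he]
          ring
        · rw [ec_succ s e' (by omega), oc_succ s e' (by omega), if_neg he, if_neg he,
            add_zero]
          rw [hh_succ_r]
          simp only [wlv, if_neg he]
          ring
      · have h1 : PS s (e'+1) Xl = 0 := PS_empty _ _ _ (by omega)
        have h2 : Xl + 1 - (e'+1-s) = 0 := by omega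
        have ihB := ih s e' hse' (by omega)
        have h3 : Xl - (e' - s) = 0 := by omega
        rw [h1, mul_zero, add_zero, ihB, h2, h3, hh_zero, hh_zero]

end Paths


lemma hh00 {K : Type*} [CommRing K] (q : K) (n : ℕ) (hn : n ≠ 0) : hh q 0 0 n = 0 := by
  obtain ⟨n', rfl⟩ : ∃ n', n = n' + 1 := ⟨n - 1, by omega⟩
  simp [hh]

lemma PS_nil (s e Xl : ℕ) (h : e < s) : PS s e Xl = 0 := by
  simp [PS, pathsF, Nat.not_le.mpr h]

lemma oc_pair (a t : ℕ) : oc (2*a+1) (2*a+2*t+2) = t+1 ∧ ec (2*a+1) (2*a+2*t+2) = t+1 := by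
  induction t with
  | zero =>
    constructor
    · rw [show 2*a+2*0+2 = (2*a+1)+1 by ring, oc_succ _ _ (by omega), oc_self]
      have h1 : ¬ Even (2*a+1) := by simp [Nat.even_add_one, parity_simps]
      have h2 : Even (2*a+1+1) := by simp [Nat.even_add_one, parity_simps]
      rw [if_neg h1, if_pos h2]
    · rw [show 2*a+2*0+2 = (2*a+1)+1 by ring, ec_succ _ _ (by omega), ec_self]
      have h1 : ¬ Even (2*a+1) := by simp [Nat.even_add_one, parity_simps]
      have h2 : Even (2*a+1+1) := by simp [Nat.even_add_one, parity_simps]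
      rw [if_neg h1, if_pos h2]
  | succ t ih =>
    have e1 : 2*a+2*(t+1)+2 = (2*a+2*t+2+1)+1 := by ring
    have hodd : ¬ Even (2*a+2*t+2+1) := by simp [Nat.even_add_one, parity_simps]
    have heven : Even (2*a+2*t+2+1+1) := by simp [Nat.even_add_one, parity_simps]
    constructor
    · rw [e1, oc_succ _ _ (by omega), oc_succ _ _ (by omega), ih.1,
        if_neg hodd, if_pos heven]
    · rw [e1, ec_succ _ _ (by omega), ec_succ _ _ (by omega), ih.2,
        if_neg hodd, if_pos heven]

/-- The matrix entries as path sums. -/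
lemma entry_eq (d i j : ℕ) :
    cP ((d:ℤ)+i+1) ((d:ℤ)+j)
      = PS (2*j+1) (2*i+4) (d+i+2) + Polynomial.X * PS (2*j+1) (2*i+4) (d+i+1) := by
  have harg1 : ((d:ℤ)+i+1) - ((d:ℤ)+j) + 1 = (i:ℤ) - j + 2 := by ring
  have harg2 : 2*((d:ℤ)+j) - ((d:ℤ)+i+1) = (d:ℤ) + 2*j - i - 1 := by ring
  have harg3 : 2*((d:ℤ)+j) - ((d:ℤ)+i+1) - 1 = (d:ℤ) + 2*j - i - 2 := by ring
  unfold cP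
  rw [harg1, harg2]
  have harg3' : (d:ℤ) + 2*j - i - 1 - 1 = (d:ℤ) + 2*j - i - 2 := by ring
  rw [harg3']
  by_cases hij : j ≤ i+1
  · -- genuine rows: 2j+1 ≤ 2i+4
    have hoc := oc_pair j (i+1-j)
    have hocv : oc (2*j+1) (2*i+4) = i+2-j := by
      have : 2*j+2*(i+1-j)+2 = 2*i+4 := by omega
      rw [← this]; rw [hoc.1]; omega
    have hecv : ec (2*j+1) (2*i+4) = i+2-j := by
      have : 2*j+2*(i+1-j)+2 = 2*i+4 := by omega
      rw [← this]; rw [hoc.2]; omega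
    by_cases hc0 : i+1 ≤ d+2*j
    · -- first hz term is genuine
      have hcond0 : (0:ℤ) ≤ (i:ℤ)-j+2 ∧ (0:ℤ) ≤ (i:ℤ)-j+2 ∧ (0:ℤ) ≤ (d:ℤ)+2*j-i-1 := by
        refine ⟨by omega, by omega, by omega⟩
      have hPS0 : PS (2*j+1) (2*i+4) (d+i+2)
          = hh ((Polynomial.X : Pz)^2) (i+2-j) (i+2-j) (d+2*j-i-1) := by
        rw [PS_eq _ _ _ (by omega) (by omega), hocv, hecv]
        congr 1
        omega
      have ht0 : ((i:ℤ)-j+2).toNat = i+2-j := by omega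
      have ht1 : ((d:ℤ)+2*j-i-1).toNat = d+2*j-i-1 := by omega
      by_cases hc1 : i+2 ≤ d+2*j
      · have hcond1 : (0:ℤ) ≤ (i:ℤ)-j+2 ∧ (0:ℤ) ≤ (i:ℤ)-j+2 ∧ (0:ℤ) ≤ (d:ℤ)+2*j-i-2 := by
          refine ⟨by omega, by omega, by omega⟩
        have hPS1 : PS (2*j+1) (2*i+4) (d+i+1)
            = hh ((Polynomial.X : Pz)^2) (i+2-j) (i+2-j) (d+2*j-i-2) := by
          rw [PS_eq _ _ _ (by omega) (by omega), hocv, hecv]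
          congr 1
          omega
        have ht2 : ((d:ℤ)+2*j-i-2).toNat = d+2*j-i-2 := by omega
        rw [hz, hz, if_pos hcond0, if_pos hcond1, ht0, ht1, ht2, hPS0, hPS1]
      · -- n1 < 0
        have hcond1 : ¬ ((0:ℤ) ≤ (i:ℤ)-j+2 ∧ (0:ℤ) ≤ (i:ℤ)-j+2 ∧ (0:ℤ) ≤ (d:ℤ)+2*j-i-2) := by
          push_neg
          intro _ _
          omega
        have hPS1 : PS (2*j+1) (2*i+4) (d+i+1) = 0 := PS_empty _ _ _ (by omega)
        rw [hz, hz, if_pos hcond0, if_neg hcond1, ht0, ht1, hPS0, hPS1, mul_zero]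
    · -- n0 < 0 : everything vanishes
      have hcond0 : ¬ ((0:ℤ) ≤ (i:ℤ)-j+2 ∧ (0:ℤ) ≤ (i:ℤ)-j+2 ∧ (0:ℤ) ≤ (d:ℤ)+2*j-i-1) := by
        push_neg; intro _ _; omega
      have hcond1 : ¬ ((0:ℤ) ≤ (i:ℤ)-j+2 ∧ (0:ℤ) ≤ (i:ℤ)-j+2 ∧ (0:ℤ) ≤ (d:ℤ)+2*j-i-2) := by
        push_neg; intro _ _; omega
      have hPS0 : PS (2*j+1) (2*i+4) (d+i+2) = 0 := PS_empty _ _ _ (by omega)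
      have hPS1 : PS (2*j+1) (2*i+4) (d+i+1) = 0 := PS_empty _ _ _ (by omega)
      rw [hz, hz, if_neg hcond0, if_neg hcond1, hPS0, hPS1, mul_zero]
  · -- j ≥ i+2 : zero rows
    have hPS0 : PS (2*j+1) (2*i+4) (d+i+2) = 0 := PS_nil _ _ _ (by omega)
    have hPS1 : PS (2*j+1) (2*i+4) (d+i+1) = 0 := PS_nil _ _ _ (by omega)
    rw [hPS0, hPS1, mul_zero, add_zero]
    by_cases hj2 : j = i+2
    · subst hj2
      push_cast
      have hr : (i:ℤ) - ((i:ℤ)+2) + 2 = 0 := by ring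
      rw [hr, hz, hz]
      split_ifs with h1 h2
      · rw [show Int.toNat 0 = 0 from rfl, hh00 _ _ (by omega), hh00 _ _ (by omega),
          mul_zero, add_zero]
      · exact absurd ⟨le_rfl, le_rfl, by omega⟩ h2
      · exact absurd ⟨le_rfl, le_rfl, by omega⟩ h1
      · rw [mul_zero, add_zero]
    · -- j ≥ i+3 : r < 0
      have hcond0 : ¬ ((0:ℤ) ≤ (i:ℤ)-j+2 ∧ (0:ℤ) ≤ (i:ℤ)-j+2 ∧ (0:ℤ) ≤ (d:ℤ)+2*j-i-1) := by
        push_neg; intro h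
        exfalso
        omega
      have hcond1 : ¬ ((0:ℤ) ≤ (i:ℤ)-j+2 ∧ (0:ℤ) ≤ (i:ℤ)-j+2 ∧ (0:ℤ) ≤ (d:ℤ)+2*j-i-2) := by
        push_neg; intro h
        exfalso
        omega
      rw [hz, hz, if_neg hcond0, if_neg hcond1, mul_zero, add_zero]


-- ===== utilities for the LGV involution =====

lemma mem_pathsF {s e X : ℕ} {R : Finset ℕ} :
    R ∈ pathsF s e X ↔ s ≤ e ∧ R ⊆ range X ∧ R.card = e - s := by
  unfold pathsF
  by_cases h : s ≤ e
  · rw [if_pos h, mem_powersetCard]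
    tauto
  · rw [if_neg h]
    simp only [notMem_empty, false_iff]
    tauto

lemma pval_zero (s X : ℕ) (R : Finset ℕ) : pval s X R 0 = s := by
  simp [pval]

lemma pval_step {X : ℕ} {R : Finset ℕ} (hR : R ⊆ range X) (s t : ℕ) :
    pval s X R (t+1) = pval s X R t ∨ pval s X R (t+1) = pval s X R t + 1 := by
  unfold pval
  by_cases ht : t < X
  · have h1 : t + 1 - X = 0 := by omega
    have h0 : t - X = 0 := by omega
    rw [h1, h0]
    by_cases htR : t ∈ R
    · right
      have : R ∩ range (t+1) = insert t (R ∩ range t) := by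
        ext y
        simp only [mem_inter, mem_range, mem_insert]
        constructor
        · rintro ⟨h2, h3⟩
          rcases Nat.lt_succ_iff_lt_or_eq.mp h3 with h|h
          · exact Or.inr ⟨h2, h⟩
          · exact Or.inl h
        · rintro (rfl | ⟨h2, h3⟩)
          · exact ⟨htR, by omega⟩
          · exact ⟨h2, by omega⟩
      rw [this, card_insert_of_notMem (by simp)]
      omega
    · left
      have : R ∩ range (t+1) = R ∩ range t := by
        ext y
        simp only [mem_inter, mem_range]
        constructor
        · rintro ⟨h2, h3⟩
          have : y ≠ t := fun hc => htR (hc ▸ h2)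
          exact ⟨h2, by omega⟩
        · rintro ⟨h2, h3⟩
          exact ⟨h2, by omega⟩
      rw [this]
  · right
    have h1 : R ∩ range (t+1) = R ∩ range t := by
      have hX : R ∩ range (t+1) = R ∧ True := ⟨inter_eq_left.mpr (fun y hy => by
        have := hR hy; simp only [mem_range] at this ⊢; omega), trivial⟩
      have hX2 : R ∩ range t = R := inter_eq_left.mpr (fun y hy => by
        have := hR hy; simp only [mem_range] at this ⊢; omega)
      rw [hX.1, hX2]
    rw [h1]
    omega

lemma pval_add_le {X : ℕ} {R : Finset ℕ} (hR : R ⊆ range X) (s t : ℕ) :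
    ∀ u, pval s X R (t+u) ≤ pval s X R t + u := by
  intro u
  induction u with
  | zero => simp
  | succ u ih =>
    rcases pval_step hR s (t+u) with h | h
    · rw [show t+(u+1) = (t+u)+1 by ring, h]; omega
    · rw [show t+(u+1) = (t+u)+1 by ring, h]; omega

lemma pval_at_X {X : ℕ} {R : Finset ℕ} (hR : R ⊆ range X) (s : ℕ) :
    pval s X R X = s + R.card := by
  unfold pval
  have h1 : R ∩ range X = R := inter_eq_left.mpr hR
  rw [h1]
  omega

lemma pval_le {X : ℕ} {R : Finset ℕ} (s t : ℕ) (ht : t ≤ X) :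
    pval s X R t ≤ s + R.card := by
  unfold pval
  have h1 : (R ∩ range t).card ≤ R.card := card_le_card inter_subset_left
  omega

lemma pval_ge (s X t : ℕ) (R : Finset ℕ) : s ≤ pval s X R t := by
  unfold pval; omega

lemma pval_eq_val (s X t : ℕ) (R : Finset ℕ) (ht : t ≤ X) :
    pval s X R t = s + (R ∩ range t).card := by
  unfold pval
  omega

/-- discrete intermediate value : two paths with unit steps that start
strictly ordered and end weakly reversed must meet -/
lemma discrete_ivt (f g : ℕ → ℕ)
    (hf : ∀ t, f (t+1) = f t ∨ f (t+1) = f t + 1)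
    (hg : ∀ t, g (t+1) = g t ∨ g (t+1) = g t + 1) :
    ∀ T, f 0 < g 0 → g T ≤ f T → ∃ t, t ≤ T ∧ f t = g t := by
  intro T
  induction T with
  | zero => intro h1 h2; omega
  | succ T ih =>
    intro h1 h2
    by_cases hT : g T ≤ f T
    · obtain ⟨t, ht, he⟩ := ih h1 hT
      exact ⟨t, by omega, he⟩
    · push_neg at hT
      refine ⟨T+1, le_rfl, ?_⟩
      rcases hf T with h3 | h3 <;> rcases hg T with h4 | h4 <;> omega

/-- splitting the weight of a path at position `t` -/
lemma wt_split (s X t : ℕ) (R : Finset ℕ) (ht : t ≤ X) :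
    wt s X R = (∏ x ∈ range t \ R, wlv (pval s X R x)) *
      (∏ x ∈ Ico t X \ R, wlv (pval s X R x)) := by
  unfold wt
  rw [← prod_union]
  · congr 1
    ext x
    simp only [mem_union, mem_sdiff, mem_range, mem_Ico]
    by_cases hxR : x ∈ R <;> simp [hxR] <;> omega
  · rw [disjoint_left]
    intro a ha hb
    simp only [mem_sdiff, mem_range, mem_Ico] at ha hb
    omega

/-- heads agree: path values at `x < t` only depend on the head of `R` -/
lemma pval_head_eq {s X X' t : ℕ} {R R' : Finset ℕ}
    (h : R ∩ range t = R' ∩ range t) (x : ℕ) (hx : x ≤ t) (hxX : x ≤ X) (hxX' : x ≤ X') :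
    pval s X R x = pval s X' R' x := by
  unfold pval
  have h1 : R ∩ range x = R' ∩ range x := by
    have e1 : R ∩ range x = (R ∩ range t) ∩ range x := by
      rw [inter_assoc]
      congr 1
      ext y; simp only [mem_inter, mem_range]; omega
    have e2 : R' ∩ range x = (R' ∩ range t) ∩ range x := by
      rw [inter_assoc]
      congr 1
      ext y; simp only [mem_inter, mem_range]; omega
    rw [e1, e2, h]
  rw [h1]
  omega


-- ===== splice =====

/-- splice: head of `R` before `t`, tail of `R'` after `t` -/
def spl (t : ℕ) (R R' : Finset ℕ) : Finset ℕ := (R ∩ range t) ∪ (R' \ range t)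

section Splice

variable {s1 s2 X1 X2 t : ℕ} {R1 R2 : Finset ℕ}

lemma spl_head : spl t R1 R2 ∩ range t = R1 ∩ range t := by
  ext x
  simp only [spl, mem_inter, mem_union, mem_sdiff, mem_range]
  tauto

lemma spl_tail_mem (x : ℕ) (hx : t ≤ x) : x ∈ spl t R1 R2 ↔ x ∈ R2 := by
  simp only [spl, mem_union, mem_inter, mem_sdiff, mem_range]
  constructor
  · rintro (⟨_, h⟩ | ⟨h, _⟩)
    · omega
    · exact h
  · intro h
    exact Or.inr ⟨h, by omega⟩

lemma spl_spl : spl t (spl t R1 R2) (spl t R2 R1) = R1 := by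
  ext x
  simp only [spl, mem_union, mem_inter, mem_sdiff, mem_range]
  by_cases hx : x < t <;> by_cases h1 : x ∈ R1 <;> simp [hx, h1] <;> tauto

lemma spl_subset (hR1 : R1 ⊆ range X1) (hR2 : R2 ⊆ range X2) (ht2 : t ≤ X2) :
    spl t R1 R2 ⊆ range X2 := by
  intro x hx
  simp only [spl, mem_union, mem_inter, mem_sdiff, mem_range] at hx ⊢
  rcases hx with ⟨_, h⟩ | ⟨h, _⟩
  · omega
  · have := hR2 h; simp only [mem_range] at this; omega

lemma spl_card (ht1 : t ≤ X1) (ht2 : t ≤ X2)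
    (hv : pval s1 X1 R1 t = pval s2 X2 R2 t) :
    s1 + (spl t R1 R2).card = s2 + R2.card := by
  have e1 : (spl t R1 R2).card = (R1 ∩ range t).card + (R2 \ range t).card := by
    unfold spl
    rw [card_union_of_disjoint]
    rw [disjoint_left]
    intro a ha hb
    simp only [mem_inter, mem_sdiff, mem_range] at ha hb
    omega
  have e2 : (R2 ∩ range t).card + (R2 \ range t).card = R2.card := by
    rw [Finset.card_inter_add_card_sdiff]
  have e3 := pval_eq_val s1 X1 t R1 ht1
  have e4 := pval_eq_val s2 X2 t R2 ht2
  omega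

lemma spl_pval_tail (ht1 : t ≤ X1) (ht2 : t ≤ X2)
    (hv : pval s1 X1 R1 t = pval s2 X2 R2 t) (x : ℕ) (hx : t ≤ x) :
    pval s1 X2 (spl t R1 R2) x = pval s2 X2 R2 x := by
  have e0 : R2 ∩ range x = (R2 ∩ range t) ∪ ((R2 \ range t) ∩ range x) := by
    ext y
    simp only [mem_union, mem_inter, mem_sdiff, mem_range]
    by_cases hy : y ∈ R2 <;> simp [hy] <;> omega
  have e0' : (R2 ∩ range x).card = (R2 ∩ range t).card + ((R2 \ range t) ∩ range x).card := by
    rw [e0, card_union_of_disjoint]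
    rw [disjoint_left]
    intro a ha hb
    simp only [mem_inter, mem_sdiff, mem_range] at ha hb
    omega
  have e1 : (spl t R1 R2) ∩ range x = (R1 ∩ range t) ∪ ((R2 \ range t) ∩ range x) := by
    ext y
    simp only [spl, mem_union, mem_inter, mem_sdiff, mem_range]
    by_cases hy1 : y ∈ R1 <;> by_cases hy2 : y ∈ R2 <;> simp [hy1, hy2] <;> omega
  have e1' : ((spl t R1 R2) ∩ range x).card
      = (R1 ∩ range t).card + ((R2 \ range t) ∩ range x).card := by
    rw [e1, card_union_of_disjoint]
    rw [disjoint_left]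
    intro a ha hb
    simp only [mem_inter, mem_sdiff, mem_range] at ha hb
    omega
  have e3 := pval_eq_val s1 X1 t R1 ht1
  have e4 := pval_eq_val s2 X2 t R2 ht2
  unfold pval at *
  omega

lemma spl_wt (hR1 : R1 ⊆ range X1) (hR2 : R2 ⊆ range X2) (ht1 : t ≤ X1) (ht2 : t ≤ X2)
    (hv : pval s1 X1 R1 t = pval s2 X2 R2 t) :
    wt s1 X2 (spl t R1 R2)
      = (∏ x ∈ range t \ R1, wlv (pval s1 X1 R1 x)) *
        (∏ x ∈ Ico t X2 \ R2, wlv (pval s2 X2 R2 x)) := by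
  rw [wt_split s1 X2 t _ ht2]
  congr 1
  · -- heads
    have hset : range t \ spl t R1 R2 = range t \ R1 := by
      ext x
      simp only [mem_sdiff, mem_range]
      constructor
      · rintro ⟨h1, h2⟩
        refine ⟨h1, fun hc => h2 ?_⟩
        simp only [spl, mem_union, mem_inter, mem_range]
        exact Or.inl ⟨hc, h1⟩
      · rintro ⟨h1, h2⟩
        refine ⟨h1, fun hc => ?_⟩
        simp only [spl, mem_union, mem_inter, mem_sdiff, mem_range] at hc
        rcases hc with ⟨h3, _⟩ | ⟨_, h4⟩
        · exact h2 h3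
        · omega
    rw [hset]
    apply prod_congr rfl
    intro x hx
    simp only [mem_sdiff, mem_range] at hx
    rw [pval_head_eq (X := X2) (X' := X1) (t := t) spl_head x (by omega) (by omega) (by omega)]
  · -- tails
    have hset : Ico t X2 \ spl t R1 R2 = Ico t X2 \ R2 := by
      ext x
      simp only [mem_sdiff, mem_Ico]
      constructor
      · rintro ⟨h1, h2⟩
        exact ⟨h1, fun hc => h2 ((spl_tail_mem x h1.1).mpr hc)⟩
      · rintro ⟨h1, h2⟩
        exact ⟨h1, fun hc => h2 ((spl_tail_mem x h1.1).mp hc)⟩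
    rw [hset]
    apply prod_congr rfl
    intro x hx
    simp only [mem_sdiff, mem_Ico] at hx
    rw [spl_pval_tail ht1 ht2 hv x hx.1.1]

lemma spl_wt_pair (hR1 : R1 ⊆ range X1) (hR2 : R2 ⊆ range X2) (ht1 : t ≤ X1) (ht2 : t ≤ X2)
    (hv : pval s1 X1 R1 t = pval s2 X2 R2 t) :
    wt s1 X2 (spl t R1 R2) * wt s2 X1 (spl t R2 R1)
      = wt s1 X1 R1 * wt s2 X2 R2 := by
  rw [spl_wt hR1 hR2 ht1 ht2 hv, spl_wt hR2 hR1 ht2 ht1 hv.symm,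
    wt_split s1 X1 t R1 ht1, wt_split s2 X2 t R2 ht2]
  ring

end Splice


-- ===== LGV configurations =====

def XLd (d i : ℕ) (ε : Bool) : ℕ := if ε then d+i+1 else d+i+2

noncomputable def Pset (d j i : ℕ) : Finset (Bool × Finset ℕ) :=
  ({false} ×ˢ pathsF (2*j+1) (2*i+4) (XLd d i false)) ∪
  ({true} ×ˢ pathsF (2*j+1) (2*i+4) (XLd d i true))

noncomputable def wP (d j i : ℕ) (p : Bool × Finset ℕ) : Pz :=
  (if p.1 then Polynomial.X else 1) * wt (2*j+1) (XLd d i p.1) p.2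

lemma mem_Pset {d j i : ℕ} {p : Bool × Finset ℕ} :
    p ∈ Pset d j i ↔ p.2 ∈ pathsF (2*j+1) (2*i+4) (XLd d i p.1) := by
  rcases p with ⟨ε, R⟩
  cases ε <;>
    simp [Pset, Finset.mem_union, Finset.mem_product]

lemma entry_Pset (d i j : ℕ) :
    cP ((d:ℤ)+i+1) ((d:ℤ)+j) = ∑ p ∈ Pset d j i, wP d j i p := by
  rw [entry_eq]
  have hdisj : Disjoint ({false} ×ˢ pathsF (2*j+1) (2*i+4) (XLd d i false))
      ({true} ×ˢ pathsF (2*j+1) (2*i+4) (XLd d i true)) := by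
    rw [disjoint_left]
    intro p hp hp'
    rw [Finset.mem_product] at hp hp'
    simp at hp hp'
    rcases p with ⟨ε, R⟩
    simp_all
  rw [Pset, sum_union hdisj, Finset.sum_product, Finset.sum_product]
  simp only [sum_singleton, wP]
  rw [PS, PS, mul_sum]
  simp [XLd]

section Config

variable (d k : ℕ) (σ : Equiv.Perm (Fin k)) (F : Fin k → Bool × Finset ℕ)

def XX (j : Fin k) : ℕ := XLd d (σ j) (F j).1

def V (j : Fin k) (t : ℕ) : ℕ := pval (2*(j:ℕ)+1) (XX d k σ F j) (F j).2 t

def CrossAt (t : ℕ) : Prop :=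
  ∃ j j' : Fin k, j ≠ j' ∧ t ≤ XX d k σ F j ∧ t ≤ XX d k σ F j' ∧
    V d k σ F j t = V d k σ F j' t

def Valid : Prop :=
  ∀ j : Fin k, (F j).2 ∈ pathsF (2*(j:ℕ)+1) (2*((σ j : Fin k):ℕ)+4) (XX d k σ F j)

variable {d k σ F}

lemma valid_sub (hV : Valid d k σ F) (j : Fin k) : (F j).2 ⊆ range (XX d k σ F j) :=
  (mem_pathsF.mp (hV j)).2.1

lemma valid_se (hV : Valid d k σ F) (j : Fin k) : 2*(j:ℕ)+1 ≤ 2*((σ j : Fin k):ℕ)+4 :=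
  (mem_pathsF.mp (hV j)).1

lemma valid_card (hV : Valid d k σ F) (j : Fin k) :
    2*(j:ℕ)+1 + ((F j).2).card = 2*((σ j : Fin k):ℕ)+4 := by
  have h1 := (mem_pathsF.mp (hV j)).2.2
  have h2 := valid_se hV j
  omega

lemma V_zero (j : Fin k) : V d k σ F j 0 = 2*(j:ℕ)+1 := pval_zero _ _ _

lemma V_end (hV : Valid d k σ F) (j : Fin k) :
    V d k σ F j (XX d k σ F j) = 2*((σ j : Fin k):ℕ)+4 := by
  rw [V, pval_at_X (valid_sub hV j), valid_card hV j]

lemma V_step (hV : Valid d k σ F) (j : Fin k) (t : ℕ) :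
    V d k σ F j (t+1) = V d k σ F j t ∨ V d k σ F j (t+1) = V d k σ F j t + 1 :=
  pval_step (valid_sub hV j) _ _

lemma V_le_end (hV : Valid d k σ F) (j : Fin k) (t : ℕ) (ht : t ≤ XX d k σ F j) :
    2*((σ j : Fin k):ℕ)+4 ≤ V d k σ F j t + (XX d k σ F j - t) := by
  have h1 := pval_add_le (valid_sub hV j) (2*(j:ℕ)+1) t (XX d k σ F j - t)
  rw [show t + (XX d k σ F j - t) = XX d k σ F j by omega] at h1
  have h2 := V_end hV j
  rw [V] at h2 ⊢
  omega

lemma V_le (hV : Valid d k σ F) (j : Fin k) (t : ℕ) (ht : t ≤ XX d k σ F j) :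
    V d k σ F j t ≤ 2*((σ j : Fin k):ℕ)+4 := by
  have h1 := pval_le (R := (F j).2) (2*(j:ℕ)+1) t ht
  have h2 := valid_card hV j
  rw [V]
  omega

/-- a descent of `σ` forces a crossing -/
lemma cross_of_inversion (hV : Valid d k σ F) (j j' : Fin k)
    (hjj : (j:ℕ) < (j':ℕ)) (hσ : ((σ j' : Fin k):ℕ) < ((σ j : Fin k):ℕ)) :
    ∃ t, CrossAt d k σ F t := by
  have hA : d + ((σ j : Fin k):ℕ) + 1 ≤ XX d k σ F j ∧ XX d k σ F j ≤ d + ((σ j : Fin k):ℕ) + 2 := by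
    rw [XX, XLd]; rcases (F j).1 <;> simp
  have hB : d + ((σ j' : Fin k):ℕ) + 1 ≤ XX d k σ F j' ∧ XX d k σ F j' ≤ d + ((σ j' : Fin k):ℕ) + 2 := by
    rw [XX, XLd]; rcases (F j').1 <;> simp
  set T := XX d k σ F j' with hT
  have hT1 : T ≤ XX d k σ F j := by omega
  have h1 : V d k σ F j' T = 2*((σ j' : Fin k):ℕ)+4 := V_end hV j'
  have h2 : V d k σ F j' T ≤ V d k σ F j T := by
    have h3 := V_le_end hV j T hT1
    omega
  have h0 : V d k σ F j 0 < V d k σ F j' 0 := by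
    rw [V_zero, V_zero]; omega
  obtain ⟨t, ht, he⟩ := discrete_ivt (V d k σ F j) (V d k σ F j')
    (V_step hV j) (V_step hV j') T h0 h2
  refine ⟨t, j, j', ?_, by omega, by omega, he⟩
  intro hc
  rw [hc] at hjj
  omega

end Config


-- ===== the tail-swap involution =====

section Flip

variable {d k : ℕ} {σ : Equiv.Perm (Fin k)} {F : Fin k → Bool × Finset ℕ}

attribute [local instance] Classical.propDecidable

noncomputable def t0 (hb : ∃ t, CrossAt d k σ F t) : ℕ := Nat.find hb

lemma t0_cross (hb : ∃ t, CrossAt d k σ F t) : CrossAt d k σ F (t0 hb) :=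
  Nat.find_spec hb

lemma t0_min (hb : ∃ t, CrossAt d k σ F t) : ∀ t < t0 hb, ¬ CrossAt d k σ F t :=
  fun _ ht => Nat.find_min hb ht

def jcand (d k : ℕ) (σ : Equiv.Perm (Fin k)) (F : Fin k → Bool × Finset ℕ) (t : ℕ) :
    Finset (Fin k) :=
  univ.filter (fun j => ∃ j', j ≠ j' ∧ t ≤ XX d k σ F j ∧ t ≤ XX d k σ F j' ∧
    V d k σ F j t = V d k σ F j' t)

lemma jcand_ne (hb : ∃ t, CrossAt d k σ F t) : (jcand d k σ F (t0 hb)).Nonempty := by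
  obtain ⟨j, j', h1, h2, h3, h4⟩ := t0_cross hb
  exact ⟨j, by
    simp only [jcand, mem_filter, mem_univ, true_and]
    exact ⟨j', h1, h2, h3, h4⟩⟩

noncomputable def J1 (hb : ∃ t, CrossAt d k σ F t) : Fin k :=
  (jcand d k σ F (t0 hb)).min' (jcand_ne hb)

def pcand (d k : ℕ) (σ : Equiv.Perm (Fin k)) (F : Fin k → Bool × Finset ℕ) (t : ℕ)
    (j1 : Fin k) : Finset (Fin k) :=
  univ.filter (fun j' => j1 ≠ j' ∧ t ≤ XX d k σ F j1 ∧ t ≤ XX d k σ F j' ∧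
    V d k σ F j1 t = V d k σ F j' t)

lemma pcand_ne (hb : ∃ t, CrossAt d k σ F t) :
    (pcand d k σ F (t0 hb) (J1 hb)).Nonempty := by
  have h1 : J1 hb ∈ jcand d k σ F (t0 hb) := Finset.min'_mem _ _
  simp only [jcand, mem_filter, mem_univ, true_and] at h1
  obtain ⟨j', h1, h2, h3, h4⟩ := h1
  exact ⟨j', by
    simp only [pcand, mem_filter, mem_univ, true_and]
    exact ⟨h1, h2, h3, h4⟩⟩

noncomputable def J2 (hb : ∃ t, CrossAt d k σ F t) : Fin k :=
  (pcand d k σ F (t0 hb) (J1 hb)).min' (pcand_ne hb)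

lemma J2_spec (hb : ∃ t, CrossAt d k σ F t) :
    J1 hb ≠ J2 hb ∧ t0 hb ≤ XX d k σ F (J1 hb) ∧ t0 hb ≤ XX d k σ F (J2 hb) ∧
      V d k σ F (J1 hb) (t0 hb) = V d k σ F (J2 hb) (t0 hb) := by
  have h1 : J2 hb ∈ pcand d k σ F (t0 hb) (J1 hb) := Finset.min'_mem _ _
  simp only [pcand, mem_filter, mem_univ, true_and] at h1
  exact h1

noncomputable def flipσ (hb : ∃ t, CrossAt d k σ F t) : Equiv.Perm (Fin k) :=
  σ * Equiv.swap (J1 hb) (J2 hb)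

noncomputable def flipF (hb : ∃ t, CrossAt d k σ F t) : Fin k → Bool × Finset ℕ :=
  fun j =>
    if j = J1 hb then ((F (J2 hb)).1, spl (t0 hb) (F (J1 hb)).2 (F (J2 hb)).2)
    else if j = J2 hb then ((F (J1 hb)).1, spl (t0 hb) (F (J2 hb)).2 (F (J1 hb)).2)
    else F j

lemma flipσ_J1 (hb : ∃ t, CrossAt d k σ F t) : flipσ hb (J1 hb) = σ (J2 hb) := by
  simp [flipσ, Equiv.Perm.mul_apply, Equiv.swap_apply_left]

lemma flipσ_J2 (hb : ∃ t, CrossAt d k σ F t) : flipσ hb (J2 hb) = σ (J1 hb) := by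
  simp [flipσ, Equiv.Perm.mul_apply, Equiv.swap_apply_right]

lemma flipσ_other (hb : ∃ t, CrossAt d k σ F t) (j : Fin k) (h1 : j ≠ J1 hb)
    (h2 : j ≠ J2 hb) : flipσ hb j = σ j := by
  simp [flipσ, Equiv.Perm.mul_apply, Equiv.swap_apply_of_ne_of_ne h1 h2]

lemma flipXX_J1 (hb : ∃ t, CrossAt d k σ F t) :
    XX d k (flipσ hb) (flipF hb) (J1 hb) = XX d k σ F (J2 hb) := by
  rw [XX, XX, flipσ_J1]
  congr 1
  simp [flipF]

lemma flipXX_J2 (hb : ∃ t, CrossAt d k σ F t) :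
    XX d k (flipσ hb) (flipF hb) (J2 hb) = XX d k σ F (J1 hb) := by
  rw [XX, XX, flipσ_J2]
  congr 1
  simp only [flipF]
  rw [if_neg (Ne.symm (J2_spec hb).1)]
  simp

lemma flipXX_other (hb : ∃ t, CrossAt d k σ F t) (j : Fin k) (h1 : j ≠ J1 hb)
    (h2 : j ≠ J2 hb) : XX d k (flipσ hb) (flipF hb) j = XX d k σ F j := by
  rw [XX, XX, flipσ_other hb j h1 h2]
  congr 1
  simp [flipF, h1, h2]

lemma flipV_head (hV : Valid d k σ F) (hb : ∃ t, CrossAt d k σ F t) (j : Fin k) (t : ℕ)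
    (ht : t ≤ t0 hb) : V d k (flipσ hb) (flipF hb) j t = V d k σ F j t := by
  obtain ⟨hne, hX1, hX2, hVe⟩ := J2_spec hb
  by_cases h1 : j = J1 hb
  · subst h1
    rw [V, V, flipXX_J1]
    have h2 : (flipF hb (J1 hb)).2 = spl (t0 hb) (F (J1 hb)).2 (F (J2 hb)).2 := by
      simp [flipF]
    rw [h2]
    exact pval_head_eq spl_head t (le_refl _ |>.trans ht) (by omega) (by omega)
  · by_cases h2 : j = J2 hb
    · subst h2
      rw [V, V, flipXX_J2]
      have h3 : (flipF hb (J2 hb)).2 = spl (t0 hb) (F (J2 hb)).2 (F (J1 hb)).2 := by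
        simp only [flipF]
        rw [if_neg (Ne.symm hne)]
        simp
      rw [h3]
      exact pval_head_eq spl_head t ht (by omega) (by omega)
    · rw [V, V, flipXX_other hb j h1 h2]
      congr 1
      simp [flipF, h1, h2]

lemma flip_valid (hV : Valid d k σ F) (hb : ∃ t, CrossAt d k σ F t) :
    Valid d k (flipσ hb) (flipF hb) := by
  obtain ⟨hne, hX1, hX2, hVe⟩ := J2_spec hb
  intro j
  by_cases h1 : j = J1 hb
  · subst h1
    have h2 : (flipF hb (J1 hb)).2 = spl (t0 hb) (F (J1 hb)).2 (F (J2 hb)).2 := by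
      simp [flipF]
    rw [h2, flipXX_J1, flipσ_J1, mem_pathsF]
    have hc := spl_card (s1 := 2*((J1 hb : Fin k):ℕ)+1) (s2 := 2*((J2 hb : Fin k):ℕ)+1)
      hX1 hX2 hVe
    have hcard2 := valid_card hV (J2 hb)
    have hsle : 2*((J1 hb : Fin k):ℕ)+1 ≤ V d k σ F (J1 hb) (t0 hb) := pval_ge _ _ _ _
    have hvle : V d k σ F (J2 hb) (t0 hb) ≤ 2*((σ (J2 hb) : Fin k):ℕ)+4 :=
      V_le hV (J2 hb) (t0 hb) hX2
    rw [V] at hsle hvle hVe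
    refine ⟨by omega, spl_subset (valid_sub hV _) (valid_sub hV _) hX2, by omega⟩
  · by_cases h2 : j = J2 hb
    · subst h2
      have h3 : (flipF hb (J2 hb)).2 = spl (t0 hb) (F (J2 hb)).2 (F (J1 hb)).2 := by
        simp only [flipF]
        rw [if_neg (Ne.symm hne)]
        simp
      rw [h3, flipXX_J2, flipσ_J2, mem_pathsF]
      have hc := spl_card (s1 := 2*((J2 hb : Fin k):ℕ)+1) (s2 := 2*((J1 hb : Fin k):ℕ)+1)
        hX2 hX1 hVe.symm
      have hcard1 := valid_card hV (J1 hb)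
      have hsle : 2*((J2 hb : Fin k):ℕ)+1 ≤ V d k σ F (J2 hb) (t0 hb) := pval_ge _ _ _ _
      have hvle : V d k σ F (J1 hb) (t0 hb) ≤ 2*((σ (J1 hb) : Fin k):ℕ)+4 :=
        V_le hV (J1 hb) (t0 hb) hX1
      rw [V] at hsle hvle hVe
      refine ⟨by omega, spl_subset (valid_sub hV _) (valid_sub hV _) hX1, by omega⟩
    · have h3 : flipF hb j = F j := by simp [flipF, h1, h2]
      have h4 := hV j
      rw [h3, flipXX_other hb j h1 h2, flipσ_other hb j h1 h2]
      exact h4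

end Flip


-- ===== flip preserves weight, and is an involution =====

section Flip2

variable {d k : ℕ} {σ : Equiv.Perm (Fin k)} {F : Fin k → Bool × Finset ℕ}

attribute [local instance] Classical.propDecidable

lemma flipF_J1 (hb : ∃ t, CrossAt d k σ F t) :
    flipF hb (J1 hb) = ((F (J2 hb)).1, spl (t0 hb) (F (J1 hb)).2 (F (J2 hb)).2) := by
  simp [flipF]

lemma flipF_J2 (hb : ∃ t, CrossAt d k σ F t) :
    flipF hb (J2 hb) = ((F (J1 hb)).1, spl (t0 hb) (F (J2 hb)).2 (F (J1 hb)).2) := by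
  simp only [flipF]
  rw [if_neg (Ne.symm (J2_spec hb).1)]
  simp

lemma flipF_other (hb : ∃ t, CrossAt d k σ F t) (j : Fin k) (h1 : j ≠ J1 hb)
    (h2 : j ≠ J2 hb) : flipF hb j = F j := by
  simp [flipF, h1, h2]

lemma flip_prod (hV : Valid d k σ F) (hb : ∃ t, CrossAt d k σ F t) :
    (∏ j : Fin k, wP d (j:ℕ) (((flipσ hb) j : Fin k):ℕ) (flipF hb j))
      = ∏ j : Fin k, wP d (j:ℕ) ((σ j : Fin k):ℕ) (F j) := by
  obtain ⟨hne, hX1, hX2, hVe⟩ := J2_spec hb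
  have hVe' : pval (2*((J1 hb : Fin k):ℕ)+1) (XX d k σ F (J1 hb)) ((F (J1 hb)).2) (t0 hb)
      = pval (2*((J2 hb : Fin k):ℕ)+1) (XX d k σ F (J2 hb)) ((F (J2 hb)).2) (t0 hb) := hVe
  have key : wP d (J1 hb) ((σ (J2 hb) : Fin k):ℕ) (flipF hb (J1 hb)) *
      wP d (J2 hb) ((σ (J1 hb) : Fin k):ℕ) (flipF hb (J2 hb))
      = wP d (J1 hb) ((σ (J1 hb) : Fin k):ℕ) (F (J1 hb)) *
        wP d (J2 hb) ((σ (J2 hb) : Fin k):ℕ) (F (J2 hb)) := by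
    rw [flipF_J1, flipF_J2]
    unfold wP
    have e1 : XLd d ((σ (J2 hb) : Fin k):ℕ) ((F (J2 hb)).1) = XX d k σ F (J2 hb) := rfl
    have e2 : XLd d ((σ (J1 hb) : Fin k):ℕ) ((F (J1 hb)).1) = XX d k σ F (J1 hb) := rfl
    simp only
    rw [e1, e2]
    have hsw := spl_wt_pair (valid_sub hV (J1 hb)) (valid_sub hV (J2 hb)) hX1 hX2 hVe'
    calc (if (F (J2 hb)).1 then (Polynomial.X : Pz) else 1) *
          wt (2*((J1 hb : Fin k):ℕ)+1) (XX d k σ F (J2 hb))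
            (spl (t0 hb) (F (J1 hb)).2 (F (J2 hb)).2) *
          ((if (F (J1 hb)).1 then (Polynomial.X : Pz) else 1) *
          wt (2*((J2 hb : Fin k):ℕ)+1) (XX d k σ F (J1 hb))
            (spl (t0 hb) (F (J2 hb)).2 (F (J1 hb)).2))
        = (if (F (J1 hb)).1 then (Polynomial.X : Pz) else 1) *
            (if (F (J2 hb)).1 then (Polynomial.X : Pz) else 1) *
          (wt (2*((J1 hb : Fin k):ℕ)+1) (XX d k σ F (J2 hb))
            (spl (t0 hb) (F (J1 hb)).2 (F (J2 hb)).2) *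
           wt (2*((J2 hb : Fin k):ℕ)+1) (XX d k σ F (J1 hb))
            (spl (t0 hb) (F (J2 hb)).2 (F (J1 hb)).2)) := by ring
      _ = (if (F (J1 hb)).1 then (Polynomial.X : Pz) else 1) *
            (if (F (J2 hb)).1 then (Polynomial.X : Pz) else 1) *
          (wt (2*((J1 hb : Fin k):ℕ)+1) (XX d k σ F (J1 hb)) (F (J1 hb)).2 *
           wt (2*((J2 hb : Fin k):ℕ)+1) (XX d k σ F (J2 hb)) (F (J2 hb)).2) := by rw [hsw]
      _ = _ := by
          rw [show XX d k σ F (J1 hb) = XLd d ((σ (J1 hb) : Fin k):ℕ) ((F (J1 hb)).1) from rfl,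
            show XX d k σ F (J2 hb) = XLd d ((σ (J2 hb) : Fin k):ℕ) ((F (J2 hb)).1) from rfl]
          ring
  -- assemble the full products
  have hJ2mem : J2 hb ∈ univ.erase (J1 hb) := by
    simp [Finset.mem_erase]
    exact Ne.symm hne
  rw [← Finset.mul_prod_erase univ _ (mem_univ (J1 hb)),
    ← Finset.mul_prod_erase _ _ hJ2mem,
    ← Finset.mul_prod_erase univ
      (fun j : Fin k => wP d (j:ℕ) ((σ j : Fin k):ℕ) (F j)) (mem_univ (J1 hb)),
    ← Finset.mul_prod_erase _ (fun j : Fin k => wP d (j:ℕ) ((σ j : Fin k):ℕ) (F j)) hJ2mem]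
  have hrest : ∏ j ∈ (univ.erase (J1 hb)).erase (J2 hb),
      wP d (j:ℕ) (((flipσ hb) j : Fin k):ℕ) (flipF hb j)
      = ∏ j ∈ (univ.erase (J1 hb)).erase (J2 hb),
        wP d (j:ℕ) ((σ j : Fin k):ℕ) (F j) := by
    apply prod_congr rfl
    intro j hj
    simp only [Finset.mem_erase] at hj
    rw [flipF_other hb j hj.2.1 hj.1, flipσ_other hb j hj.2.1 hj.1]
  rw [hrest, flipσ_J1, flipσ_J2, ← mul_assoc, ← mul_assoc, key]

lemma flip_cross_t0 (hV : Valid d k σ F) (hb : ∃ t, CrossAt d k σ F t) :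
    CrossAt d k (flipσ hb) (flipF hb) (t0 hb) := by
  obtain ⟨hne, hX1, hX2, hVe⟩ := J2_spec hb
  refine ⟨J1 hb, J2 hb, hne, ?_, ?_, ?_⟩
  · rw [flipXX_J1]; exact hX2
  · rw [flipXX_J2]; exact hX1
  · rw [flipV_head hV hb _ _ le_rfl, flipV_head hV hb _ _ le_rfl]; exact hVe

lemma flip_cross_lt (hV : Valid d k σ F) (hb : ∃ t, CrossAt d k σ F t) (t : ℕ)
    (ht : t < t0 hb) : ¬ CrossAt d k (flipσ hb) (flipF hb) t := by
  obtain ⟨hne, hX1, hX2, hVe⟩ := J2_spec hb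
  rintro ⟨a, b, hab, h1, h2, h3⟩
  apply t0_min hb t ht
  have hXa : t ≤ XX d k σ F a := by
    by_cases ha1 : a = J1 hb
    · subst ha1; omega
    · by_cases ha2 : a = J2 hb
      · subst ha2; omega
      · rw [← flipXX_other hb a ha1 ha2]; exact h1
  have hXb : t ≤ XX d k σ F b := by
    by_cases hb1 : b = J1 hb
    · subst hb1; omega
    · by_cases hb2 : b = J2 hb
      · subst hb2; omega
      · rw [← flipXX_other hb b hb1 hb2]; exact h2
  refine ⟨a, b, hab, hXa, hXb, ?_⟩
  rw [← flipV_head hV hb a t (le_of_lt ht), ← flipV_head hV hb b t (le_of_lt ht)]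
  exact h3

lemma flip_hb (hV : Valid d k σ F) (hb : ∃ t, CrossAt d k σ F t) :
    ∃ t, CrossAt d k (flipσ hb) (flipF hb) t := ⟨t0 hb, flip_cross_t0 hV hb⟩

lemma flip_t0 (hV : Valid d k σ F) (hb : ∃ t, CrossAt d k σ F t)
    (hb₂ : ∃ t, CrossAt d k (flipσ hb) (flipF hb) t) : t0 hb₂ = t0 hb := by
  apply le_antisymm
  · exact Nat.find_le (flip_cross_t0 hV hb)
  · by_contra h
    push_neg at h
    exact flip_cross_lt hV hb (t0 hb₂) h (t0_cross hb₂)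

lemma flip_XX_iff (hV : Valid d k σ F) (hb : ∃ t, CrossAt d k σ F t) (c : Fin k) :
    t0 hb ≤ XX d k (flipσ hb) (flipF hb) c ↔ t0 hb ≤ XX d k σ F c := by
  obtain ⟨hne, hX1, hX2, hVe⟩ := J2_spec hb
  by_cases hc1 : c = J1 hb
  · subst hc1; rw [flipXX_J1]; exact ⟨fun _ => hX1, fun _ => hX2⟩
  · by_cases hc2 : c = J2 hb
    · subst hc2; rw [flipXX_J2]; exact ⟨fun _ => hX2, fun _ => hX1⟩
    · rw [flipXX_other hb c hc1 hc2]

lemma flip_jcand (hV : Valid d k σ F) (hb : ∃ t, CrossAt d k σ F t) :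
    jcand d k (flipσ hb) (flipF hb) (t0 hb) = jcand d k σ F (t0 hb) := by
  ext j
  simp only [jcand, mem_filter, mem_univ, true_and]
  constructor
  · rintro ⟨j', h1, h2, h3, h4⟩
    rw [flipV_head hV hb j _ le_rfl, flipV_head hV hb j' _ le_rfl] at h4
    exact ⟨j', h1, (flip_XX_iff hV hb j).mp h2, (flip_XX_iff hV hb j').mp h3, h4⟩
  · rintro ⟨j', h1, h2, h3, h4⟩
    refine ⟨j', h1, (flip_XX_iff hV hb j).mpr h2, (flip_XX_iff hV hb j').mpr h3, ?_⟩
    rw [flipV_head hV hb j _ le_rfl, flipV_head hV hb j' _ le_rfl]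
    exact h4

lemma min'_congr {α : Type*} [LinearOrder α] (A B : Finset α) (hA : A.Nonempty)
    (hB : B.Nonempty) (h : A = B) : A.min' hA = B.min' hB := by
  subst h; rfl

lemma flip_J1 (hV : Valid d k σ F) (hb : ∃ t, CrossAt d k σ F t)
    (hb₂ : ∃ t, CrossAt d k (flipσ hb) (flipF hb) t) : J1 hb₂ = J1 hb := by
  unfold J1
  apply min'_congr
  rw [flip_t0 hV hb hb₂, flip_jcand hV hb]

lemma flip_pcand (hV : Valid d k σ F) (hb : ∃ t, CrossAt d k σ F t) :
    pcand d k (flipσ hb) (flipF hb) (t0 hb) (J1 hb) = pcand d k σ F (t0 hb) (J1 hb) := by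
  ext j
  simp only [pcand, mem_filter, mem_univ, true_and]
  constructor
  · rintro ⟨h1, h2, h3, h4⟩
    rw [flipV_head hV hb _ _ le_rfl, flipV_head hV hb j _ le_rfl] at h4
    exact ⟨h1, (flip_XX_iff hV hb _).mp h2, (flip_XX_iff hV hb j).mp h3, h4⟩
  · rintro ⟨h1, h2, h3, h4⟩
    refine ⟨h1, (flip_XX_iff hV hb _).mpr h2, (flip_XX_iff hV hb j).mpr h3, ?_⟩
    rw [flipV_head hV hb _ _ le_rfl, flipV_head hV hb j _ le_rfl]
    exact h4

lemma flip_J2 (hV : Valid d k σ F) (hb : ∃ t, CrossAt d k σ F t)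
    (hb₂ : ∃ t, CrossAt d k (flipσ hb) (flipF hb) t) : J2 hb₂ = J2 hb := by
  unfold J2
  apply min'_congr
  rw [flip_t0 hV hb hb₂, flip_J1 hV hb hb₂, flip_pcand hV hb]

lemma flip_flip_σ (hV : Valid d k σ F) (hb : ∃ t, CrossAt d k σ F t)
    (hb₂ : ∃ t, CrossAt d k (flipσ hb) (flipF hb) t) : flipσ hb₂ = σ := by
  show flipσ hb * Equiv.swap (J1 hb₂) (J2 hb₂) = σ
  rw [flip_J1 hV hb hb₂, flip_J2 hV hb hb₂]
  show σ * Equiv.swap (J1 hb) (J2 hb) * Equiv.swap (J1 hb) (J2 hb) = σ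
  rw [mul_assoc, Equiv.swap_mul_self, mul_one]

lemma flip_flip_F (hV : Valid d k σ F) (hb : ∃ t, CrossAt d k σ F t)
    (hb₂ : ∃ t, CrossAt d k (flipσ hb) (flipF hb) t) : flipF hb₂ = F := by
  funext j
  by_cases h1 : j = J1 hb
  · subst h1
    have e1 : flipF hb₂ (J1 hb) = (((flipF hb) (J2 hb₂)).1,
        spl (t0 hb₂) ((flipF hb) (J1 hb₂)).2 ((flipF hb) (J2 hb₂)).2) := by
      rw [show J1 hb = J1 hb₂ from (flip_J1 hV hb hb₂).symm]
      exact flipF_J1 hb₂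
    rw [e1, flip_J1 hV hb hb₂, flip_J2 hV hb hb₂, flip_t0 hV hb hb₂,
      flipF_J1 hb, flipF_J2 hb]
    simp only
    rw [spl_spl]
  · by_cases h2 : j = J2 hb
    · subst h2
      have e1 : flipF hb₂ (J2 hb) = (((flipF hb) (J1 hb₂)).1,
          spl (t0 hb₂) ((flipF hb) (J2 hb₂)).2 ((flipF hb) (J1 hb₂)).2) := by
        rw [show J2 hb = J2 hb₂ from (flip_J2 hV hb hb₂).symm]
        exact flipF_J2 hb₂
      rw [e1, flip_J1 hV hb hb₂, flip_J2 hV hb hb₂, flip_t0 hV hb hb₂,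
        flipF_J1 hb, flipF_J2 hb]
      simp only
      rw [spl_spl]
    · have e1 : flipF hb₂ j = flipF hb j := by
        apply flipF_other hb₂ j
        · rw [flip_J1 hV hb hb₂]; exact h1
        · rw [flip_J2 hV hb hb₂]; exact h2
      rw [e1, flipF_other hb j h1 h2]

lemma flip_ne (hb : ∃ t, CrossAt d k σ F t) : flipσ hb ≠ σ := by
  intro hc
  have h1 : flipσ hb (J1 hb) = σ (J1 hb) := by rw [hc]
  rw [flipσ_J1] at h1
  exact (J2_spec hb).1 (σ.injective h1.symm)

end Flip2


-- ===== positivity of coefficients =====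

def NN (p : Pz) : Prop := ∀ n, 0 ≤ p.coeff n

lemma NN_one : NN 1 := by
  intro n
  rw [Polynomial.coeff_one]
  split <;> simp

lemma NN_X : NN Polynomial.X := by
  intro n
  rw [Polynomial.coeff_X]
  split <;> simp

lemma NN_mul {p q : Pz} (hp : NN p) (hq : NN q) : NN (p * q) := by
  intro n
  rw [Polynomial.coeff_mul]
  exact Finset.sum_nonneg fun x _ => mul_nonneg (hp x.1) (hq x.2)

lemma NN_prod {ι : Type*} (s : Finset ι) (f : ι → Pz) (h : ∀ i ∈ s, NN (f i)) :
    NN (∏ i ∈ s, f i) :=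
  Finset.prod_induction f NN (fun _ _ => NN_mul) NN_one h

lemma NN_X_pow (r : ℕ) : NN (Polynomial.X ^ r : Pz) := by
  intro n
  rw [Polynomial.coeff_X_pow]
  split <;> simp

lemma NN_wlv (y : ℕ) : NN (wlv y) := by
  unfold wlv
  split
  · exact NN_X_pow 2
  · exact NN_one

lemma NN_wt (s X : ℕ) (R : Finset ℕ) : NN (wt s X R) :=
  NN_prod _ _ fun x _ => NN_wlv _

lemma NN_wP (d j i : ℕ) (p : Bool × Finset ℕ) : NN (wP d j i p) := by
  unfold wP
  apply NN_mul _ (NN_wt _ _ _)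
  split
  · exact NN_X
  · exact NN_one

/-- no crossing forces the identity permutation -/
lemma good_sigma_id {d k : ℕ} {σ : Equiv.Perm (Fin k)} {F : Fin k → Bool × Finset ℕ}
    (hV : Valid d k σ F) (hg : ¬ ∃ t, CrossAt d k σ F t) : σ = 1 := by
  have hmono : StrictMono σ := by
    intro a b hab
    rcases lt_trichotomy (σ a) (σ b) with h | h | h
    · exact h
    · exact absurd (σ.injective h) (ne_of_lt hab)
    · exfalso
      apply hg
      apply cross_of_inversion hV a b
      · exact hab
      · exact h
  have hmono' : StrictMono (σ⁻¹ : Equiv.Perm (Fin k)) := by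
    intro a b hab
    rcases lt_trichotomy ((σ⁻¹ : Equiv.Perm (Fin k)) a) ((σ⁻¹ : Equiv.Perm (Fin k)) b)
      with h | h | h
    · exact h
    · exact absurd ((σ⁻¹ : Equiv.Perm (Fin k)).injective h) (ne_of_lt hab)
    · exfalso
      have h2 := hmono h
      simp only [Equiv.Perm.coe_inv, Equiv.apply_symm_apply] at h2
      omega
  have key : ∀ (τ : Equiv.Perm (Fin k)), StrictMono τ → ∀ v : ℕ, ∀ j : Fin k,
      (j:ℕ) ≤ v → (j:ℕ) ≤ ((τ j : Fin k):ℕ) := by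
    intro τ hτ v
    induction v with
    | zero => intro j hj; omega
    | succ v ih =>
      intro j hj
      by_cases h0 : (j:ℕ) = 0
      · omega
      · have hjpos : 0 < (j:ℕ) := by omega
        set j' : Fin k := ⟨(j:ℕ)-1, by omega⟩ with hj'
        have hval : (j' : ℕ) = (j:ℕ) - 1 := rfl
        have hlt : j' < j := by
          rw [Fin.lt_def]; omega
        have h2 := hτ hlt
        rw [Fin.lt_def] at h2
        have h3 := ih j' (by omega)
        omega
  apply Equiv.ext
  intro j
  have h1 : (j:ℕ) ≤ ((σ j : Fin k):ℕ) := key σ hmono (j:ℕ) j le_rfl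
  have h2 : ((σ j : Fin k):ℕ) ≤ (((σ⁻¹ : Equiv.Perm (Fin k)) (σ j) : Fin k):ℕ) :=
    key _ hmono' ((σ j : Fin k):ℕ) (σ j) le_rfl
  simp only [Equiv.Perm.coe_inv, Equiv.symm_apply_apply] at h2
  simp only [Equiv.Perm.one_apply]
  exact Fin.ext (by omega)

section Main

attribute [local instance] Classical.propDecidable

theorem Qdet_coeff_nonneg' (m k : ℕ) (hk : k ≤ m) (n : ℕ) :
    0 ≤ (Qdet m k).coeff n := by
  set d := m - k with hd
  have hmk : (m:ℤ) - (k:ℤ) = ((d:ℕ) : ℤ) := by push_cast; omega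
  -- rewrite the determinant as a sum over configurations
  have hmat : (Matrix.of fun i j : Fin k =>
      cP ((m : ℤ) - k + i + 1) ((m : ℤ) - k + j))
      = Matrix.of (fun i j : Fin k => ∑ p ∈ Pset d (j:ℕ) (i:ℕ), wP d (j:ℕ) (i:ℕ) p) := by
    funext i j
    simp only [Matrix.of_apply]
    rw [← entry_Pset d (i:ℕ) (j:ℕ)]
    congr 1 <;> rw [hmk] <;> push_cast <;> ring
  rw [Qdet, hmat, Matrix.det_apply']
  have hexp : ∀ σ : Equiv.Perm (Fin k),
      (∏ j : Fin k, (Matrix.of (fun i j : Fin k =>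
          ∑ p ∈ Pset d (j:ℕ) (i:ℕ), wP d (j:ℕ) (i:ℕ) p)) (σ j) j)
      = ∑ Fp ∈ Fintype.piFinset (fun j : Fin k => Pset d (j:ℕ) ((σ j : Fin k):ℕ)),
          ∏ j : Fin k, wP d (j:ℕ) ((σ j : Fin k):ℕ) (Fp j) := by
    intro σ
    simp only [Matrix.of_apply]
    rw [Finset.prod_univ_sum]
  simp only [hexp]
  -- one big sum over the sigma finset
  rw [show ∀ f : Equiv.Perm (Fin k) → Pz, (∑ σ : Equiv.Perm (Fin k),
      ((Equiv.Perm.sign σ : ℤ) : Pz) * f σ) = ∑ σ : Equiv.Perm (Fin k),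
      ((Equiv.Perm.sign σ : ℤ) : Pz) * f σ from fun _ => rfl]
  have hbig : (∑ σ : Equiv.Perm (Fin k), ((Equiv.Perm.sign σ : ℤ) : Pz) *
      ∑ Fp ∈ Fintype.piFinset (fun j : Fin k => Pset d (j:ℕ) ((σ j : Fin k):ℕ)),
        ∏ j : Fin k, wP d (j:ℕ) ((σ j : Fin k):ℕ) (Fp j))
      = ∑ x ∈ (Finset.univ.sigma (fun σ : Equiv.Perm (Fin k) =>
          Fintype.piFinset (fun j : Fin k => Pset d (j:ℕ) ((σ j : Fin k):ℕ)))),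
          ((Equiv.Perm.sign x.1 : ℤ) : Pz) *
            ∏ j : Fin k, wP d (j:ℕ) ((x.1 j : Fin k):ℕ) (x.2 j) := by
    rw [Finset.sum_sigma]
    apply Finset.sum_congr rfl
    intro σ _
    rw [Finset.mul_sum]
  rw [hbig]
  set S := (Finset.univ.sigma (fun σ : Equiv.Perm (Fin k) =>
      Fintype.piFinset (fun j : Fin k => Pset d (j:ℕ) ((σ j : Fin k):ℕ)))) with hS
  set G : (Σ _ : Equiv.Perm (Fin k), (Fin k → Bool × Finset ℕ)) → Pz :=
    fun x => ((Equiv.Perm.sign x.1 : ℤ) : Pz) *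
      ∏ j : Fin k, wP d (j:ℕ) ((x.1 j : Fin k):ℕ) (x.2 j) with hG
  have hmemS : ∀ x : (Σ _ : Equiv.Perm (Fin k), (Fin k → Bool × Finset ℕ)),
      x ∈ S ↔ Valid d k x.1 x.2 := by
    rintro ⟨σ, Fp⟩
    simp only [hS, Finset.mem_sigma, Finset.mem_univ, true_and, Fintype.mem_piFinset]
    unfold Valid
    constructor
    · intro h j
      have := h j
      rw [mem_Pset] at this
      exact this
    · intro h j
      rw [mem_Pset]
      exact h j
  -- split into crossing and non-crossing configurations
  rw [← Finset.sum_filter_add_sum_filter_not S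
    (fun x => ∃ t, CrossAt d k x.1 x.2 t) G]
  -- crossing part vanishes by the involution
  have hbad : (∑ x ∈ S.filter (fun x => ∃ t, CrossAt d k x.1 x.2 t), G x) = 0 := by
    apply Finset.sum_involution
      (fun a ha => ⟨flipσ (Finset.mem_filter.mp ha).2, flipF (Finset.mem_filter.mp ha).2⟩)
    · -- cancellation
      intro a ha
      have hV : Valid d k a.1 a.2 := (hmemS a).mp (Finset.mem_filter.mp ha).1
      have hb := (Finset.mem_filter.mp ha).2
      simp only [hG]
      have hsign : ((Equiv.Perm.sign (flipσ hb) : ℤ) : Pz)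
          = -((Equiv.Perm.sign a.1 : ℤ) : Pz) := by
        unfold flipσ
        rw [Equiv.Perm.sign_mul, Equiv.Perm.sign_swap (J2_spec hb).1]
        push_cast
        ring
      rw [hsign, flip_prod hV hb]
      ring
    · -- no fixed points
      intro a ha _
      intro hc
      have hb := (Finset.mem_filter.mp ha).2
      have := congrArg Sigma.fst hc
      simp only at this
      exact flip_ne hb this
    · -- involutive
      rintro ⟨σ1, Fp⟩ ha
      have hV : Valid d k σ1 Fp := (hmemS ⟨σ1, Fp⟩).mp (Finset.mem_filter.mp ha).1
      have hb := (Finset.mem_filter.mp ha).2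
      have hb₂ : ∃ t, CrossAt d k (flipσ hb) (flipF hb) t := flip_hb hV hb
      have e1 := flip_flip_σ hV hb hb₂
      have e2 := flip_flip_F hV hb hb₂
      apply Sigma.ext
      · simpa using e1
      · simpa using heq_of_eq e2
    · -- stays in the set
      intro a ha
      have hV : Valid d k a.1 a.2 := (hmemS a).mp (Finset.mem_filter.mp ha).1
      have hb := (Finset.mem_filter.mp ha).2
      rw [Finset.mem_filter]
      constructor
      · rw [hmemS]
        exact flip_valid hV hb
      · exact flip_hb hV hb
  rw [hbad, zero_add]
  -- non-crossing part has nonnegative coefficients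
  rw [Polynomial.finset_sum_coeff]
  apply Finset.sum_nonneg
  intro x hx
  have hV : Valid d k x.1 x.2 := (hmemS x).mp (Finset.mem_filter.mp hx).1
  have hg : ¬ ∃ t, CrossAt d k x.1 x.2 t := (Finset.mem_filter.mp hx).2
  have hid : x.1 = 1 := good_sigma_id hV hg
  have hGx : G x = ∏ j : Fin k, wP d (j:ℕ) ((x.1 j : Fin k):ℕ) (x.2 j) := by
    simp [hG, hid]
  rw [hGx]
  exact NN_prod _ _ (fun j _ => NN_wP _ _ _ _) n

end Main


/-- for `1 ≤ k < m`, `Q_{m,k}(q)` has nonnegative (integer) coefficients. -/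
theorem Qdet_coeff_nonneg (m k : ℕ) (hk1 : 1 ≤ k) (hk : k < m) (i : ℕ) :
    0 ≤ (Qdet m k).coeff i :=
  Qdet_coeff_nonneg' m k (le_of_lt hk) i
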